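/- Let F be a field, n ≥ 2, and s = S|n an essential initial segment of an infinite sequence S over F, with n ∈ [n_i, n_{i+1}) and partial quotients q = q^{(i)}, q' = q^{(i-1)} of S̄. Let e_s = n + 1 − 2·LC_n. Then the set of nonzero annihilating polynomials of s is exactly {φ' q_1 − φ q'_1 : φ' ≠ 0, deg φ ≤ deg φ' − e_s}, and the set of minimal polynomials of s is exactly {φ' q_1 − φ q'_1 : φ' ∈ F^×, deg φ ≤ −e_s}. -/

import Mathlib

open Polynomial HahnSeries in
/-- Polynomial part of a Laurent series in `x⁻¹` (the series variable is `x⁻¹`,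
so the coefficient of `xᵏ` is the coefficient at exponent `-k`). -/
noncomputable def polPart {F : Type*} [Field F] (L : LaurentSeries F) : Polynomial F :=
  ∑ k ∈ Finset.range ((-L.order).toNat + 1), Polynomial.C (L.coeff (-(k : ℤ))) * Polynomial.X ^ k

/-- Embedding of polynomials in `x` into Laurent series in `x⁻¹`. -/
noncomputable def toL {F : Type*} [Field F] (p : Polynomial F) : LaurentSeries F :=
  ∑ k ∈ Finset.range (p.natDegree + 1), HahnSeries.single (-(k : ℤ)) (p.coeff k)

/-- Generating function `S̄ = Σ_{i ≤ 0} S_i xⁱ` of an infinite sequence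
(`S k` denotes `S₋ₖ`), as a Laurent series in `x⁻¹`. -/
noncomputable def sbar {F : Type*} [Field F] (S : ℕ → F) : LaurentSeries F :=
  HahnSeries.ofPowerSeries ℤ F (PowerSeries.mk S)

/-- The remainders `b_i` of the continued-fraction algorithm for `S̄` (junk `0` after it stops). -/
noncomputable def cfB {F : Type*} [Field F] (S : ℕ → F) : ℕ → LaurentSeries F
  | 0 => HahnSeries.single 1 1 * sbar S
  | (i + 1) => (cfB S i)⁻¹ - toL (polPart (cfB S i)⁻¹)

/-- `cfA S i` is the partial-quotient polynomial `a_{i+1}`. -/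
noncomputable def cfA {F : Type*} [Field F] (S : ℕ → F) (i : ℕ) : Polynomial F :=
  polPart (cfB S i)⁻¹

/-- `cfQ S i = (q^{(i-1)}, q^{(i)})`, the consecutive partial quotients of `S̄`,
with `q^{(-1)} = (0,1)`, `q^{(0)} = (1,0)`, `q^{(i+1)} = a_{i+1} q^{(i)} + q^{(i-1)}`. -/
noncomputable def cfQ {F : Type*} [Field F] (S : ℕ → F) :
    ℕ → (Polynomial F × Polynomial F) × (Polynomial F × Polynomial F)
  | 0 => ((0, 1), (1, 0))
  | (i + 1) => ((cfQ S i).2,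
      (cfA S i * (cfQ S i).2.1 + (cfQ S i).1.1,
       cfA S i * (cfQ S i).2.2 + (cfQ S i).1.2))

/-- `vLE L m` : the exponential valuation of `L` (largest `x`-degree) is `≤ m`. -/
def vLE {F : Type*} [Field F] (L : LaurentSeries F) (m : ℤ) : Prop :=
  ∀ i : ℤ, m < i → L.coeff (-i) = 0

/-- `IsPosPart L g` : `x·g = [L]`, the strictly-positive `x`-degree part of `L`. -/
def IsPosPart {F : Type*} [Field F] (L : LaurentSeries F) (g : Polynomial F) : Prop :=
  ∀ k : ℕ, g.coeff k = L.coeff (-(k + 1 : ℤ))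
open Polynomial in
/-- φ of degree d satisfies the annihilating condition for the length-`n` sequence
`s₀, s₋₁, …, s₁₋ₙ` (where `s k` denotes `s₋ₖ`). -/
def AnnCond {D : Type*} [CommRing D] (n : ℕ) (s : ℕ → D) (φ : Polynomial D) : Prop :=
  ∀ t : ℕ, t + φ.natDegree + 1 ≤ n →
    ∑ j ∈ Finset.range (φ.natDegree + 1), φ.coeff j * s (t + j) = 0

/-- φ is a nonzero annihilating polynomial of the length-`n` sequence `s`. -/
def Annihilates {D : Type*} [CommRing D] (n : ℕ) (s : ℕ → D) (φ : Polynomial D) : Prop :=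
  φ ≠ 0 ∧ AnnCond n s φ

/-- Linear complexity: minimal degree of a nonzero annihilating polynomial. -/
noncomputable def LC {D : Type*} [CommRing D] (n : ℕ) (s : ℕ → D) : ℕ :=
  sInf {d | ∃ φ : Polynomial D, Annihilates n s φ ∧ φ.natDegree = d}

/-- `x·ψ = [φ·s̄]`, the strictly-positive-degree part of `φ·s̄`, expressed coefficientwise. -/
def SeqNum {D : Type*} [CommRing D] (n : ℕ) (s : ℕ → D) (φ ψ : Polynomial D) : Prop :=
  ∀ k : ℕ, ψ.coeff k = ∑ j ∈ Finset.range (φ.natDegree + 1),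
    if k + 1 ≤ j ∧ j - (k + 1) < n then φ.coeff j * s (j - (k + 1)) else 0

/-- `(φ, ψ)` is a solution for the length-`n` sequence `s`. -/
def IsSolution {D : Type*} [CommRing D] (n : ℕ) (s : ℕ → D) (φ ψ : Polynomial D) : Prop :=
  Annihilates n s φ ∧ SeqNum n s φ ψ

namespace CFaux
open Polynomial HahnSeries
variable {F : Type*} [Field F]

/-- order of `L` is at least `m` (coefficientwise). -/
def ordGE (L : LaurentSeries F) (m : ℤ) : Prop := ∀ e : ℤ, e < m → L.coeff e = 0

lemma sum_coeff {α : Type*} (s : Finset α) (f : α → LaurentSeries F) (a : ℤ) :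
    (∑ x ∈ s, f x).coeff a = ∑ x ∈ s, (f x).coeff a := by
  classical
  induction s using Finset.induction with
  | empty => simp
  | insert a s h ih => simp [Finset.sum_insert h, ih]

lemma ordGE_zero (m : ℤ) : ordGE (0 : LaurentSeries F) m := fun _ _ => rfl

lemma ordGE_mono {L : LaurentSeries F} {m m' : ℤ} (h : ordGE L m) (h' : m' ≤ m) :
    ordGE L m' := fun e he => h e (lt_of_lt_of_le he h')

lemma ordGE_neg {L : LaurentSeries F} {m : ℤ} (h : ordGE L m) : ordGE (-L) m := by
  intro e he; simp [h e he]

lemma ordGE_sub {L M : LaurentSeries F} {m : ℤ} (h : ordGE L m) (h' : ordGE M m) :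
    ordGE (L - M) m := by
  intro e he; simp [HahnSeries.coeff_sub, h e he, h' e he]

lemma ordGE_add {L M : LaurentSeries F} {m : ℤ} (h : ordGE L m) (h' : ordGE M m) :
    ordGE (L + M) m := by
  intro e he; simp [HahnSeries.coeff_add, h e he, h' e he]

lemma ordGE_mul {L M : LaurentSeries F} {m k : ℤ} (h : ordGE L m) (h' : ordGE M k) :
    ordGE (L * M) (m + k) := by
  intro e he
  rw [HahnSeries.coeff_mul]
  apply Finset.sum_eq_zero
  intro ij hij
  rw [Finset.mem_addAntidiagonal] at hij
  obtain ⟨h1, h2, h3⟩ := hij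
  by_contra hne
  have hL : L.coeff ij.1 ≠ 0 := fun h0 => hne (by simp [h0])
  have hM : M.coeff ij.2 ≠ 0 := fun h0 => hne (by simp [h0])
  have e1 : m ≤ ij.1 := by by_contra hc; exact hL (h _ (lt_of_not_ge hc))
  have e2 : k ≤ ij.2 := by by_contra hc; exact hM (h' _ (lt_of_not_ge hc))
  omega

lemma le_order_of_ordGE {L : LaurentSeries F} {m : ℤ} (h0 : L ≠ 0) (h : ordGE L m) :
    m ≤ L.order := by
  by_contra hc
  exact (show L.coeff L.order ≠ 0 by rw [← HahnSeries.leadingCoeff_eq]; exact HahnSeries.leadingCoeff_ne_zero.mpr h0) (h _ (lt_of_not_ge hc))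

lemma ordGE_of_le_order {L : LaurentSeries F} {m : ℤ} (h : m ≤ L.order) (h0 : L ≠ 0) :
    ordGE L m := fun e he =>
  HahnSeries.coeff_eq_zero_of_lt_order (lt_of_lt_of_le he h)

lemma order_eq_of_ordGE {L : LaurentSeries F} {m : ℤ} (h : ordGE L m)
    (hc : L.coeff m ≠ 0) : L.order = m := by
  have h0 : L ≠ 0 := fun h0 => hc (by simp [h0])
  exact le_antisymm (HahnSeries.order_le_of_coeff_ne_zero hc) (le_order_of_ordGE h0 h)

/-- exact low-order coefficient of a product -/
lemma mul_coeff_ord {L M : LaurentSeries F} {m k : ℤ} (h : ordGE L m) (h' : ordGE M k) :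
    (L * M).coeff (m + k) = L.coeff m * M.coeff k := by
  by_cases hL : L.coeff m = 0
  · rw [hL, zero_mul]
    -- every term in the antidiagonal sum vanishes
    rw [HahnSeries.coeff_mul]
    apply Finset.sum_eq_zero
    intro ij hij
    rw [Finset.mem_addAntidiagonal] at hij
    obtain ⟨h1, h2, h3⟩ := hij
    by_contra hne
    have hL1 : L.coeff ij.1 ≠ 0 := fun h0 => hne (by simp [h0])
    have hM1 : M.coeff ij.2 ≠ 0 := fun h0 => hne (by simp [h0])
    have e1 : m ≤ ij.1 := by by_contra hcc; exact hL1 (h _ (lt_of_not_ge hcc))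
    have e2 : k ≤ ij.2 := by by_contra hcc; exact hM1 (h' _ (lt_of_not_ge hcc))
    have : ij.1 = m := by omega
    exact hL1 (this ▸ hL)
  · by_cases hM : M.coeff k = 0
    · rw [hM, mul_zero]
      rw [HahnSeries.coeff_mul]
      apply Finset.sum_eq_zero
      intro ij hij
      rw [Finset.mem_addAntidiagonal] at hij
      obtain ⟨h1, h2, h3⟩ := hij
      by_contra hne
      have hL1 : L.coeff ij.1 ≠ 0 := fun h0 => hne (by simp [h0])
      have hM1 : M.coeff ij.2 ≠ 0 := fun h0 => hne (by simp [h0])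
      have e1 : m ≤ ij.1 := by by_contra hcc; exact hL1 (h _ (lt_of_not_ge hcc))
      have e2 : k ≤ ij.2 := by by_contra hcc; exact hM1 (h' _ (lt_of_not_ge hcc))
      have : ij.2 = k := by omega
      exact hM1 (this ▸ hM)
    · have hoL : L.order = m := order_eq_of_ordGE h hL
      have hoM : M.order = k := order_eq_of_ordGE h' hM
      have := HahnSeries.coeff_mul_order_add_order L M
      rw [hoL, hoM, HahnSeries.leadingCoeff_eq, HahnSeries.leadingCoeff_eq, hoL, hoM] at this
      exact this

lemma toL_eq (p : Polynomial F) :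
    toL p = Polynomial.eval₂ (HahnSeries.C : F →+* LaurentSeries F)
      (HahnSeries.single (-1 : ℤ) 1) p := by
  rw [Polynomial.eval₂_eq_sum_range, toL]
  apply Finset.sum_congr rfl
  intro k _
  rw [HahnSeries.single_pow]
  have : (HahnSeries.C : F →+* LaurentSeries F) (p.coeff k) = HahnSeries.single (0:ℤ) (p.coeff k) := rfl
  rw [this, HahnSeries.single_mul_single]
  congr 1
  · simp
  · simp

lemma toL_add (p q : Polynomial F) : toL (p + q) = toL p + toL q := by
  simp [toL_eq, Polynomial.eval₂_add]

lemma toL_mul (p q : Polynomial F) : toL (p * q) = toL p * toL q := by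
  simp [toL_eq, Polynomial.eval₂_mul]

lemma toL_one : toL (1 : Polynomial F) = 1 := by simp [toL_eq]

lemma toL_zero : toL (0 : Polynomial F) = 0 := by simp [toL_eq]

lemma toL_neg (p : Polynomial F) : toL (-p) = -(toL p) := by
  simp [toL_eq, Polynomial.eval₂_neg]

lemma toL_sub (p q : Polynomial F) : toL (p - q) = toL p - toL q := by
  rw [sub_eq_add_neg, toL_add, toL_neg, sub_eq_add_neg]

lemma toL_coeff (p : Polynomial F) (k : ℕ) : (toL p).coeff (-(k : ℤ)) = p.coeff k := by
  rw [toL, sum_coeff]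
  by_cases hk : k ≤ p.natDegree
  · rw [Finset.sum_eq_single k]
    · simp
    · intro b _ hbk
      rw [HahnSeries.coeff_single]
      have : (-(k:ℤ)) ≠ -(b:ℤ) := by omega
      simp [this]
    · intro hmem
      exact absurd (Finset.mem_range.mpr (Nat.lt_succ_of_le hk)) hmem
  · rw [Finset.sum_eq_zero, eq_comm]
    · exact Polynomial.coeff_eq_zero_of_natDegree_lt (lt_of_not_ge hk)
    · intro b hb
      rw [Finset.mem_range] at hb
      have : b ≠ k := by omega
      rw [HahnSeries.coeff_single]
      have h2 : (-(k:ℤ)) ≠ -(b:ℤ) := by omega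
      simp [h2]

lemma toL_coeff_pos (p : Polynomial F) {e : ℤ} (he : 0 < e) : (toL p).coeff e = 0 := by
  rw [toL, sum_coeff]
  apply Finset.sum_eq_zero
  intro b _
  rw [HahnSeries.coeff_single]
  have : e ≠ -(b:ℤ) := by omega
  simp [this]

lemma toL_coeff' (p : Polynomial F) (e : ℤ) (he : e ≤ 0) :
    (toL p).coeff e = p.coeff (-e).toNat := by
  have h : e = -(((-e).toNat : ℕ) : ℤ) := by omega
  rw [h, toL_coeff]
  congr 1
  omega

lemma ordGE_toL (p : Polynomial F) : ordGE (toL p) (-(p.natDegree : ℤ)) := by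
  intro e he
  rcases le_or_gt e 0 with h0 | h0
  · rw [toL_coeff' p e h0]
    apply Polynomial.coeff_eq_zero_of_natDegree_lt
    omega
  · exact toL_coeff_pos p h0

lemma toL_ne_zero {p : Polynomial F} (hp : p ≠ 0) : toL p ≠ 0 := by
  intro h
  apply hp
  ext k
  have := toL_coeff p k
  rw [h] at this
  simpa using this.symm

lemma toL_coeff_natDegree (p : Polynomial F) :
    (toL p).coeff (-(p.natDegree : ℤ)) = p.leadingCoeff := toL_coeff p _

lemma natDegree_le_of_ordGE {p : Polynomial F} {m : ℤ} (h : ordGE (toL p) (-m))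
    (hp : p ≠ 0) : (p.natDegree : ℤ) ≤ m := by
  by_contra hc
  have h1 : (-(p.natDegree : ℤ)) < -m := by omega
  have h2 := h _ h1
  rw [toL_coeff] at h2
  exact (Polynomial.leadingCoeff_ne_zero.mpr hp) h2

lemma eq_zero_of_ordGE_pos {p : Polynomial F} {m : ℤ} (h : ordGE (toL p) m)
    (hm : 0 < m) : p = 0 := by
  by_contra hp
  have := natDegree_le_of_ordGE (m := -m) (by simpa using h) hp
  omega

lemma polPart_coeff (L : LaurentSeries F) (k : ℕ) :
    (polPart L).coeff k = L.coeff (-(k : ℤ)) := by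
  rw [polPart, Polynomial.finset_sum_coeff]
  by_cases hk : k ≤ (-L.order).toNat
  · rw [Finset.sum_eq_single k]
    · simp
    · intro b _ hbk
      rw [Polynomial.coeff_C_mul, Polynomial.coeff_X_pow]
      simp [Ne.symm hbk]
    · intro hmem
      exact absurd (Finset.mem_range.mpr (Nat.lt_succ_of_le hk)) hmem
  · rw [Finset.sum_eq_zero, eq_comm]
    · apply HahnSeries.coeff_eq_zero_of_lt_order
      have : (0:ℤ) ≤ -L.order ∨ -L.order < 0 := le_or_gt _ _
      omega
    · intro b hb
      rw [Finset.mem_range] at hb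
      rw [Polynomial.coeff_C_mul, Polynomial.coeff_X_pow]
      have : k ≠ b := by omega
      simp [this]

lemma toL_polPart_coeff (L : LaurentSeries F) {e : ℤ} (he : e ≤ 0) :
    (toL (polPart L)).coeff e = L.coeff e := by
  rw [toL_coeff' _ e he, polPart_coeff]
  congr 1
  omega

lemma sbar_coeff_nat (S : ℕ → F) (k : ℕ) : (sbar S).coeff (k : ℤ) = S k := by
  rw [sbar, HahnSeries.ofPowerSeries_apply_coeff, PowerSeries.coeff_mk]

lemma sbar_coeff_neg (S : ℕ → F) {e : ℤ} (he : e < 0) : (sbar S).coeff e = 0 := by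
  rw [sbar, HahnSeries.ofPowerSeries_apply]
  apply HahnSeries.embDomain_notin_range
  rintro ⟨k, hk⟩
  have : (k : ℤ) = e := hk
  omega

lemma cfB_zero_coeff (S : ℕ → F) (e : ℤ) : (cfB S 0).coeff e = (sbar S).coeff (e - 1) := by
  show (HahnSeries.single (1:ℤ) (1:F) * sbar S).coeff e = _
  have := HahnSeries.coeff_single_mul_add (r := (1:F)) (x := sbar S) (a := e - 1) (b := (1:ℤ))
  simp only [sub_add_cancel] at this
  rw [this, one_mul]

lemma cfB_zero_coeff_succ (S : ℕ → F) (t : ℕ) : (cfB S 0).coeff ((t : ℤ) + 1) = S t := by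
  rw [cfB_zero_coeff]; simpa using sbar_coeff_nat S t

lemma ordGE_cfB (S : ℕ → F) (j : ℕ) : ordGE (cfB S j) 1 := by
  cases j with
  | zero => intro e he; rw [cfB_zero_coeff]; exact sbar_coeff_neg S (by omega)
  | succ j =>
    intro e he
    show ((cfB S j)⁻¹ - toL (polPart (cfB S j)⁻¹)).coeff e = 0
    rw [HahnSeries.coeff_sub, toL_polPart_coeff _ (by omega : e ≤ 0), sub_self]

lemma cfB_succ_coeff_pos (S : ℕ → F) (j : ℕ) {e : ℤ} (he : 0 < e) :
    (cfB S (j+1)).coeff e = ((cfB S j)⁻¹).coeff e := by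
  show ((cfB S j)⁻¹ - toL (polPart (cfB S j)⁻¹)).coeff e = _
  rw [HahnSeries.coeff_sub, toL_coeff_pos _ he, sub_zero]

lemma cfB_zero_of_zero (S : ℕ → F) (j : ℕ) (h : cfB S j = 0) : cfB S (j+1) = 0 := by
  show (cfB S j)⁻¹ - toL (polPart (cfB S j)⁻¹) = 0
  rw [h, inv_zero]
  have : polPart (0 : LaurentSeries F) = 0 := by
    ext k; rw [polPart_coeff]; simp
  rw [this]
  have : toL (0 : Polynomial F) = 0 := by simp [toL]
  rw [this, sub_zero]

lemma cfB_ne_zero_of_ne_zero (S : ℕ → F) {j k : ℕ} (h : cfB S j ≠ 0) (hk : k ≤ j) :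
    cfB S k ≠ 0 := by
  by_contra hc
  apply h
  have : ∀ m, cfB S (k + m) = 0 := by
    intro m; induction m with
    | zero => simpa using hc
    | succ m ih => exact cfB_zero_of_zero S (k+m) ih
  have := this (j - k)
  rwa [Nat.add_sub_cancel' hk] at this

-- inverse facts
lemma inv_order {b : LaurentSeries F} (hb : b ≠ 0) : (b⁻¹).order = -b.order := by
  have h1 : b * b⁻¹ = 1 := mul_inv_cancel₀ hb
  have h2 : (b⁻¹) ≠ 0 := inv_ne_zero hb
  have := HahnSeries.order_mul hb h2
  rw [h1] at this
  have hone : (1 : LaurentSeries F).order = 0 := HahnSeries.order_one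
  omega

lemma cfA_natDegree (S : ℕ → F) (j : ℕ) (hb : cfB S j ≠ 0) :
    ((cfA S j).natDegree : ℤ) = (cfB S j).order ∧ (cfA S j).leadingCoeff ≠ 0 ∧
      1 ≤ (cfB S j).order := by
  set b := cfB S j with hbdef
  have hord : 1 ≤ b.order := le_order_of_ordGE hb (ordGE_cfB S j)
  have hinv : (b⁻¹) ≠ 0 := inv_ne_zero hb
  have hio : (b⁻¹).order = -b.order := inv_order hb
  set o : ℕ := b.order.toNat with ho
  have hoz : (o : ℤ) = b.order := by omega
  -- coefficients of cfA S j = polPart b⁻¹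
  have hcoeff : ∀ k : ℕ, (cfA S j).coeff k = (b⁻¹).coeff (-(k:ℤ)) := fun k => polPart_coeff _ k
  have hlead : (cfA S j).coeff o ≠ 0 := by
    rw [hcoeff]
    have : -(o:ℤ) = (b⁻¹).order := by omega
    rw [this]
    rw [← HahnSeries.leadingCoeff_eq]; exact HahnSeries.leadingCoeff_ne_zero.mpr hinv
  have hhigh : ∀ k : ℕ, o < k → (cfA S j).coeff k = 0 := by
    intro k hk
    rw [hcoeff]
    apply HahnSeries.coeff_eq_zero_of_lt_order
    omega
  have hdeg : (cfA S j).natDegree = o := by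
    apply le_antisymm
    · exact Polynomial.natDegree_le_iff_coeff_eq_zero.mpr (fun N hN => hhigh N hN)
    · exact Polynomial.le_natDegree_of_ne_zero hlead
  refine ⟨by omega, ?_, hord⟩
  rw [Polynomial.leadingCoeff, hdeg]
  exact hlead

noncomputable def Rp (S : ℕ → F) (j : ℕ) : LaurentSeries F :=
  toL (cfQ S j).1.1 * cfB S 0 - toL (cfQ S j).1.2
noncomputable def Rq (S : ℕ → F) (j : ℕ) : LaurentSeries F :=
  toL (cfQ S j).2.1 * cfB S 0 - toL (cfQ S j).2.2

lemma Rp_succ (S : ℕ → F) (j : ℕ) : Rp S (j+1) = Rq S j := by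
  simp [Rp, Rq, cfQ]

lemma invariant (S : ℕ → F) : ∀ j, (∀ k, k < j → cfB S k ≠ 0) →
    Rq S j = -(cfB S j) * Rp S j ∧
    Rp S j ≠ 0 ∧
    ordGE (Rp S j) ((cfQ S j).2.1.natDegree) ∧
    (Rp S j).coeff ((cfQ S j).2.1.natDegree) ≠ 0 ∧
    (cfQ S j).2.1 ≠ 0 ∧
    ((cfQ S j).1.1.natDegree < (cfQ S j).2.1.natDegree ∨ j = 0) := by
  intro j
  induction j with
  | zero =>
    intro _
    have hq : cfQ S 0 = (((0:Polynomial F), (1:Polynomial F)), ((1:Polynomial F), (0:Polynomial F))) := rfl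
    constructor
    · show Rq S 0 = _
      simp only [Rq, Rp, hq, toL_one, toL_zero]
      ring
    refine ⟨?_, ?_, ?_, ?_, Or.inr rfl⟩
    · simp only [Rp, hq, toL_one, toL_zero]
      simp only [zero_mul, zero_sub, ne_eq, neg_eq_zero]
      exact one_ne_zero
    · simp only [Rp, hq, toL_one, toL_zero]
      intro e he
      simp only [Polynomial.natDegree_one, Nat.cast_zero] at he
      rw [zero_mul, zero_sub, HahnSeries.coeff_neg, HahnSeries.coeff_one]
      simp [show e ≠ 0 by omega]
    · simp only [Rp, hq, toL_one, toL_zero]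
      rw [zero_mul, zero_sub, HahnSeries.coeff_neg]
      simp
    · simp only [hq]; exact one_ne_zero
  | succ j ih =>
    intro hb
    have hbj : cfB S j ≠ 0 := hb j (Nat.lt_succ_self j)
    obtain ⟨hRq, hRp0, hordRp, hcoefRp, hq0, hdlt⟩ := ih (fun k hk => hb k (Nat.lt_succ_of_lt hk))
    obtain ⟨hda, hlA, ho1⟩ := cfA_natDegree S j hbj
    set q' : Polynomial F := (cfQ S j).1.1
    set q : Polynomial F := (cfQ S j).2.1
    set q2' : Polynomial F := (cfQ S j).1.2
    set q2 : Polynomial F := (cfQ S j).2.2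
    set a : Polynomial F := cfA S j
    have hA0 : a ≠ 0 := Polynomial.leadingCoeff_ne_zero.mp hlA
    have hdA : 1 ≤ a.natDegree := by omega
    have hcfQ : cfQ S (j+1) = ((q, q2), (a * q + q', a * q2 + q2')) := rfl
    -- degree of new q
    have hmul0 : a * q ≠ 0 := mul_ne_zero hA0 hq0
    have hdmul : (a * q).natDegree = a.natDegree + q.natDegree := Polynomial.natDegree_mul hA0 hq0
    have hq'lt : q'.natDegree < (a * q).natDegree := by
      rcases hdlt with h | h
      · omega
      · have : q' = (0 : Polynomial F) := by
          show (cfQ S j).1.1 = 0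
          rw [h]; rfl
        rw [this]
        simpa using by omega
    have hdnew : (a * q + q').natDegree = a.natDegree + q.natDegree := by
      rw [Polynomial.natDegree_add_eq_left_of_natDegree_lt hq'lt, hdmul]
    have hnew0 : a * q + q' ≠ 0 := by
      intro hc
      have : q' = -(a * q) := by linear_combination hc
      rw [this] at hq'lt
      simp at hq'lt
    -- (a) Rq (j+1) = -(cfB S (j+1)) * Rp (j+1)
    have hRpSucc : Rp S (j+1) = Rq S j := Rp_succ S j
    have hRqSucc : Rq S (j+1) = toL a * Rq S j + Rp S j := by
      simp only [Rq, Rp, hcfQ, toL_add, toL_mul]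
      ring
    have hRpInv : Rp S j = -(cfB S j)⁻¹ * Rq S j := by
      rw [hRq]
      have h : -(cfB S j)⁻¹ * (-(cfB S j) * Rp S j) = ((cfB S j)⁻¹ * cfB S j) * Rp S j := by ring
      rw [h, inv_mul_cancel₀ hbj, one_mul]
    have hcfBsucc : -(cfB S (j+1)) = toL a - (cfB S j)⁻¹ := by
      show -((cfB S j)⁻¹ - toL (polPart (cfB S j)⁻¹)) = _
      show -((cfB S j)⁻¹ - toL a) = _
      ring
    have ha : Rq S (j+1) = -(cfB S (j+1)) * Rp S (j+1) := by
      rw [hRqSucc, hRpInv, hcfBsucc, hRpSucc]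
      ring
    refine ⟨ha, ?_, ?_, ?_, ?_, ?_⟩
    · -- Rp (j+1) ≠ 0
      rw [hRpSucc, hRq]
      exact mul_ne_zero (neg_ne_zero.mpr hbj) hRp0
    · -- ordGE
      rw [hRpSucc, hRq]
      have h1 : ordGE (-(cfB S j)) ((cfB S j).order) :=
        ordGE_neg (ordGE_of_le_order le_rfl hbj)
      have h2 := ordGE_mul h1 hordRp
      have : ((cfQ S (j+1)).2.1.natDegree : ℤ) = (cfB S j).order + (q.natDegree : ℤ) := by
        rw [hcfQ]
        simp only [hdnew]
        push_cast
        omega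
      rw [this]
      exact h2
    · -- coeff ≠ 0
      rw [hRpSucc, hRq]
      have h1 : ordGE (-(cfB S j)) ((cfB S j).order) :=
        ordGE_neg (ordGE_of_le_order le_rfl hbj)
      have heq : ((cfQ S (j+1)).2.1.natDegree : ℤ) = (cfB S j).order + (q.natDegree : ℤ) := by
        rw [hcfQ]
        simp only [hdnew]
        push_cast
        omega
      rw [heq, mul_coeff_ord h1 hordRp]
      apply mul_ne_zero
      · rw [HahnSeries.coeff_neg]
        simp only [ne_eq, neg_eq_zero]
        rw [← HahnSeries.leadingCoeff_eq]; exact HahnSeries.leadingCoeff_ne_zero.mpr hbj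
      · exact hcoefRp
    · rw [hcfQ]; exact hnew0
    · left
      rw [hcfQ]
      simpa [hdnew] using by omega

lemma toL_mul_coeff (p : Polynomial F) (L : LaurentSeries F) (e : ℤ) :
    (toL p * L).coeff e = ∑ j ∈ Finset.range (p.natDegree + 1), p.coeff j * L.coeff (e + j) := by
  rw [toL, Finset.sum_mul, sum_coeff]
  apply Finset.sum_congr rfl
  intro j _
  have := HahnSeries.coeff_single_mul_add (r := p.coeff j) (x := L) (a := e + j) (b := -(j:ℤ))
  have h2 : (e + (j:ℤ)) + (-(j:ℤ)) = e := by ring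
  rw [h2] at this
  rw [this]

lemma annCond_iff (n : ℕ) (S : ℕ → F) (f : Polynomial F) :
    AnnCond n S f ↔ ∀ t : ℕ, t + f.natDegree + 1 ≤ n →
      (toL f * cfB S 0).coeff ((t : ℤ) + 1) = 0 := by
  have key : ∀ t : ℕ, (toL f * cfB S 0).coeff ((t : ℤ) + 1)
      = ∑ j ∈ Finset.range (f.natDegree + 1), f.coeff j * S (t + j) := by
    intro t
    rw [toL_mul_coeff]
    apply Finset.sum_congr rfl
    intro j _
    congr 1
    have h : ((t : ℤ) + 1 + (j : ℤ)) = ((t + j : ℕ) : ℤ) + 1 := by push_cast; ring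
    rw [h, cfB_zero_coeff_succ]
  constructor
  · intro h t ht; rw [key]; exact h t ht
  · intro h t ht; rw [← key]; exact h t ht

lemma annCond_of (n : ℕ) (S : ℕ → F) (f g : Polynomial F)
    (h : ordGE (toL f * cfB S 0 - toL g) ((n : ℤ) - f.natDegree + 1)) :
    AnnCond n S f := by
  rw [annCond_iff]
  intro t ht
  have h1 := h ((t : ℤ) + 1) (by omega)
  rw [HahnSeries.coeff_sub, toL_coeff_pos g (by omega : (0:ℤ) < (t:ℤ)+1), sub_zero] at h1
  exact h1

lemma ordGE_of_annCond (n : ℕ) (S : ℕ → F) (f : Polynomial F) (h : AnnCond n S f) :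
    ordGE (toL f * cfB S 0 - toL (polPart (toL f * cfB S 0))) ((n : ℤ) - f.natDegree + 1) := by
  rw [annCond_iff] at h
  intro e he
  rcases le_or_gt e 0 with h0 | h0
  · rw [HahnSeries.coeff_sub, toL_polPart_coeff _ h0, sub_self]
  · rw [HahnSeries.coeff_sub, toL_coeff_pos _ h0, sub_zero]
    have ht : e = ((e - 1).toNat : ℤ) + 1 := by omega
    rw [ht]
    exact h (e-1).toNat (by omega)

lemma detQ (S : ℕ → F) : ∀ j,
    (cfQ S j).2.1 * (cfQ S j).1.2 - (cfQ S j).2.2 * (cfQ S j).1.1 = (-1 : Polynomial F)^j := by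
  intro j
  induction j with
  | zero => simp [cfQ]
  | succ j ih =>
    have hq : cfQ S (j+1) = ((cfQ S j).2,
      (cfA S j * (cfQ S j).2.1 + (cfQ S j).1.1,
       cfA S j * (cfQ S j).2.2 + (cfQ S j).1.2)) := rfl
    rw [hq]
    simp only [pow_succ]
    linear_combination (-1 : Polynomial F) * ih

lemma lemA (S : ℕ → F) (i n : ℕ) (hi : 1 ≤ i)
    (hex : cfB S (i-1) ≠ 0)
    (hni : (cfQ S i).1.1.natDegree + (cfQ S i).2.1.natDegree ≤ n)
    (hni1 : cfB S i = 0 ∨ n < (cfQ S (i+1)).1.1.natDegree + (cfQ S (i+1)).2.1.natDegree)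
    (φ φ' : Polynomial F) (hφ' : φ' ≠ 0)
    (hbound : φ = 0 ∨ (φ.natDegree : ℤ) ≤ (φ'.natDegree : ℤ) + 2*((cfQ S i).2.1.natDegree : ℤ) - n - 1) :
    Annihilates n S (φ' * (cfQ S i).2.1 - φ * (cfQ S i).1.1) ∧
    (φ' * (cfQ S i).2.1 - φ * (cfQ S i).1.1).natDegree = φ'.natDegree + (cfQ S i).2.1.natDegree := by
  have hne : ∀ k, k < i → cfB S k ≠ 0 := fun k hk =>
    cfB_ne_zero_of_ne_zero S hex (by omega)
  obtain ⟨hRq, hRp0, hordRp, hcoefRp, hq0, hdlt⟩ := invariant S i hne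
  set q' : Polynomial F := (cfQ S i).1.1 with hq'def
  set q : Polynomial F := (cfQ S i).2.1 with hqdef
  set q2' : Polynomial F := (cfQ S i).1.2
  set q2 : Polynomial F := (cfQ S i).2.2
  set L : ℕ := q.natDegree with hLdef
  have hq'L : q'.natDegree < L := by
    rcases hdlt with h | h
    · exact h
    · omega
  set N : ℕ := φ'.natDegree + L with hNdef
  set f : Polynomial F := φ' * q - φ * q' with hfdef
  -- degree of the φ * q' term
  have hkey : (φ * q').natDegree < N ∨ φ * q' = 0 := by
    rcases hbound with h | h
    · right; rw [h, zero_mul]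
    · left
      have h1 : (φ * q').natDegree ≤ φ.natDegree + q'.natDegree := Polynomial.natDegree_mul_le
      have h2 : (q'.natDegree : ℤ) + (L:ℤ) ≤ n := by exact_mod_cast hni
      omega
  have hcoefN : (φ * q').coeff N = 0 := by
    rcases hkey with h | h
    · exact Polynomial.coeff_eq_zero_of_natDegree_lt h
    · rw [h]; simp
  have hfN : f.coeff N ≠ 0 := by
    rw [hfdef, Polynomial.coeff_sub, hcoefN, sub_zero, hNdef]
    rw [Polynomial.coeff_mul_degree_add_degree]
    exact mul_ne_zero (Polynomial.leadingCoeff_ne_zero.mpr hφ')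
      (Polynomial.leadingCoeff_ne_zero.mpr hq0)
  have hf0 : f ≠ 0 := fun h => hfN (by rw [h]; simp)
  have hfdeg : f.natDegree = N := by
    apply le_antisymm
    · apply (Polynomial.natDegree_sub_le _ _).trans
      apply max_le
      · exact le_of_eq (Polynomial.natDegree_mul hφ' hq0)
      · rcases hkey with h | h
        · omega
        · rw [h]; simp
    · exact Polynomial.le_natDegree_of_ne_zero hfN
  refine ⟨⟨hf0, ?_⟩, hfdeg⟩
  -- the annihilating condition
  apply annCond_of n S f (φ' * q2 - φ * q2')
  have hID : toL f * cfB S 0 - toL (φ' * q2 - φ * q2')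
      = toL φ' * Rq S i - toL φ * Rp S i := by
    rw [hfdef, toL_sub, toL_sub, toL_mul, toL_mul, toL_mul, toL_mul]
    rw [Rq, Rp, ← hq'def, ← hqdef]
    ring
  rw [hID, hfdeg]
  have hNcast : ((N:ℤ)) = (φ'.natDegree : ℤ) + L := by push_cast; omega
  apply ordGE_sub
  · -- toL φ' * Rq S i
    by_cases hbi : cfB S i = 0
    · rw [hRq, hbi]
      simp only [neg_zero, zero_mul, mul_zero]
      exact ordGE_zero _
    · have hD1 : n < L + (cfQ S (i+1)).2.1.natDegree := by
        rcases hni1 with h | h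
        · exact absurd h hbi
        · have : (cfQ S (i+1)).1.1 = q := rfl
          rw [this] at h
          omega
      have hne' : ∀ k, k < i + 1 → cfB S k ≠ 0 := by
        intro k hk
        rcases Nat.lt_succ_iff_lt_or_eq.mp hk with h | h
        · exact hne k h
        · rw [h]; exact hbi
      obtain ⟨_, _, hordRp', _, _, _⟩ := invariant S (i+1) hne'
      rw [← Rp_succ S i]
      have := ordGE_mul (ordGE_toL φ') hordRp'
      apply ordGE_mono this
      push_cast
      omega
  · -- toL φ * Rp S i
    rcases hbound with h | h
    · rw [h, toL_zero, zero_mul]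
      exact ordGE_zero _
    · have := ordGE_mul (ordGE_toL φ) hordRp
      apply ordGE_mono this
      push_cast at h ⊢
      omega

lemma lemB (S : ℕ → F) (i n : ℕ) (hi : 1 ≤ i)
    (hex : cfB S (i-1) ≠ 0)
    (hni : (cfQ S i).1.1.natDegree + (cfQ S i).2.1.natDegree ≤ n)
    (hni1 : cfB S i = 0 ∨ n < (cfQ S (i+1)).1.1.natDegree + (cfQ S (i+1)).2.1.natDegree)
    (f : Polynomial F) (hf : Annihilates n S f) :
    ∃ φ φ' : Polynomial F, φ' ≠ 0 ∧
      (φ'.natDegree : ℤ) = (f.natDegree : ℤ) - ((cfQ S i).2.1.natDegree : ℤ) ∧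
      (φ = 0 ∨ (φ.natDegree : ℤ) ≤ (f.natDegree : ℤ) + ((cfQ S i).2.1.natDegree : ℤ) - n - 1) ∧
      f = φ' * (cfQ S i).2.1 - φ * (cfQ S i).1.1 := by
  obtain ⟨hf0, hann⟩ := hf
  have hne : ∀ k, k < i → cfB S k ≠ 0 := fun k hk =>
    cfB_ne_zero_of_ne_zero S hex (by omega)
  obtain ⟨hRq, hRp0, hordRp, hcoefRp, hq0, hdlt⟩ := invariant S i hne
  set q' : Polynomial F := (cfQ S i).1.1 with hq'def
  set q : Polynomial F := (cfQ S i).2.1 with hqdef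
  set q2' : Polynomial F := (cfQ S i).1.2 with hq2'def
  set q2 : Polynomial F := (cfQ S i).2.2 with hq2def
  set L : ℕ := q.natDegree with hLdef
  have hq'L : q'.natDegree < L := by
    rcases hdlt with h | h
    · exact h
    · omega
  set g : Polynomial F := polPart (toL f * cfB S 0) with hgdef
  set G : LaurentSeries F := toL f * cfB S 0 - toL g with hGdef
  have hG : ordGE G ((n : ℤ) - f.natDegree + 1) := ordGE_of_annCond n S f hann
  set ε : Polynomial F := (-1 : Polynomial F)^i with hεdef
  have hε2 : ε * ε = 1 := by
    rw [hεdef, ← _root_.pow_add]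
    exact Even.neg_one_pow ⟨i, by omega⟩
  set φ' : Polynomial F := ε * (f * q2' - g * q') with hφ'def
  set φ : Polynomial F := ε * (f * q2 - g * q) with hφdef
  clear_value ε φ' φ
  have hdet : q * q2' - q2 * q' = ε := by rw [hεdef]; exact detQ S i
  -- the representation identity
  have hrep : f = φ' * q - φ * q' := by
    rw [hφ'def, hφdef]
    linear_combination (-(ε * f)) * hdet + (-f) * hε2
  -- sign handling
  have hsign : toL ε = 1 ∨ toL ε = (-1 : LaurentSeries F) := by
    rcases Nat.even_or_odd i with h | h
    · left; rw [hεdef, Even.neg_one_pow h, toL_one]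
    · right; rw [hεdef, Odd.neg_one_pow h, toL_neg, toL_one]
  -- core series for φ'
  set M : LaurentSeries F := -(toL f) * Rp S i + toL q' * G with hMdef
  have hMeq : toL φ' = toL ε * M := by
    rw [hφ'def, toL_mul, toL_sub, toL_mul, toL_mul]
    congr 1
    rw [hMdef, hGdef, Rp, ← hq'def, ← hq2'def]
    ring
  have hM1 : ordGE M ((L:ℤ) - f.natDegree) := by
    apply ordGE_add
    · have := ordGE_mul (ordGE_neg (ordGE_toL f)) hordRp
      apply ordGE_mono this
      omega
    · have := ordGE_mul (ordGE_toL q') hG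
      apply ordGE_mono this
      have : ((q'.natDegree : ℤ)) ≤ (n:ℤ) - L := by
        have := hni
        push_cast
        omega
      omega
  have hM2 : M.coeff ((L:ℤ) - f.natDegree) ≠ 0 := by
    rw [hMdef, HahnSeries.coeff_add]
    have hz : (toL q' * G).coeff ((L:ℤ) - f.natDegree) = 0 := by
      have h2 := ordGE_mul (ordGE_toL q') hG
      apply h2
      have : ((q'.natDegree : ℤ)) ≤ (n:ℤ) - L := by push_cast; omega
      omega
    rw [hz, add_zero]
    have heq : ((L:ℤ) - f.natDegree) = (-(f.natDegree:ℤ)) + (L:ℤ) := by ring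
    rw [heq, mul_coeff_ord (ordGE_neg (ordGE_toL f)) hordRp]
    apply mul_ne_zero
    · rw [HahnSeries.coeff_neg, toL_coeff]
      simp only [ne_eq, neg_eq_zero]
      exact Polynomial.leadingCoeff_ne_zero.mpr hf0
    · exact hcoefRp
  -- transfer to φ'
  have hφ'ord : ordGE (toL φ') ((L:ℤ) - f.natDegree) := by
    rcases hsign with h | h
    · rw [hMeq, h, one_mul]; exact hM1
    · rw [hMeq, h]
      intro e he
      have : ((-1 : LaurentSeries F) * M) = -M := by ring
      rw [this, HahnSeries.coeff_neg, hM1 e he, neg_zero]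
  have hφ'coef : (toL φ').coeff ((L:ℤ) - f.natDegree) ≠ 0 := by
    rcases hsign with h | h
    · rw [hMeq, h, one_mul]; exact hM2
    · rw [hMeq, h]
      have : ((-1 : LaurentSeries F) * M) = -M := by ring
      rw [this, HahnSeries.coeff_neg]
      simpa using hM2
  have hLf : (L : ℤ) ≤ (f.natDegree : ℤ) := by
    by_contra hc
    exact hφ'coef (toL_coeff_pos φ' (by omega))
  have hφ'0 : φ' ≠ 0 := by
    intro h
    rw [h, toL_zero] at hφ'coef
    exact hφ'coef rfl
  have hφ'deg : (φ'.natDegree : ℤ) = (f.natDegree : ℤ) - L := by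
    apply le_antisymm
    · apply natDegree_le_of_ordGE _ hφ'0
      have : -((f.natDegree : ℤ) - L) = (L:ℤ) - f.natDegree := by ring
      rw [this]
      exact hφ'ord
    · set k : ℕ := (f.natDegree - L : ℕ) with hkdef
      have hkc : (k : ℤ) = (f.natDegree : ℤ) - L := by omega
      have : (toL φ').coeff (-(k:ℤ)) ≠ 0 := by
        rw [show (-(k:ℤ)) = (L:ℤ) - f.natDegree by omega]
        exact hφ'coef
      rw [toL_coeff] at this
      have := Polynomial.le_natDegree_of_ne_zero this
      omega
  -- bound for φ
  have hφord : ordGE (toL φ) ((n:ℤ) + 1 - L - f.natDegree) := by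
    have hNeq : toL φ = toL ε * (-(toL f) * Rq S i + toL q * G) := by
      rw [hφdef, toL_mul, toL_sub, toL_mul, toL_mul]
      congr 1
      rw [hGdef, Rq, ← hqdef, ← hq2def]
      ring
    have hcore : ordGE (-(toL f) * Rq S i + toL q * G) ((n:ℤ) + 1 - L - f.natDegree) := by
      apply ordGE_add
      · by_cases hbi : cfB S i = 0
        · rw [hRq, hbi]
          simp only [neg_zero, zero_mul, mul_zero]
          exact ordGE_zero _
        · have hD1 : n < L + (cfQ S (i+1)).2.1.natDegree := by
            rcases hni1 with h | h
            · exact absurd h hbi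
            · have : (cfQ S (i+1)).1.1 = q := rfl
              rw [this] at h
              omega
          have hne' : ∀ k, k < i + 1 → cfB S k ≠ 0 := by
            intro k hk
            rcases Nat.lt_succ_iff_lt_or_eq.mp hk with h | h
            · exact hne k h
            · rw [h]; exact hbi
          obtain ⟨_, _, hordRp', _, _, _⟩ := invariant S (i+1) hne'
          rw [← Rp_succ S i]
          have := ordGE_mul (ordGE_neg (ordGE_toL f)) hordRp'
          apply ordGE_mono this
          omega
      · have := ordGE_mul (ordGE_toL q) hG
        apply ordGE_mono this
        omega
    rcases hsign with h | h
    · rw [hNeq, h, one_mul]; exact hcore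
    · rw [hNeq, h]
      intro e he
      have h2 : ((-1 : LaurentSeries F) * (-(toL f) * Rq S i + toL q * G)) = -(-(toL f) * Rq S i + toL q * G) := by ring
      rw [h2, HahnSeries.coeff_neg, hcore e he, neg_zero]
  have hφbound : φ = 0 ∨ (φ.natDegree : ℤ) ≤ (f.natDegree : ℤ) + (L:ℤ) - n - 1 := by
    by_cases hφ0 : φ = 0
    · left; exact hφ0
    · right
      have := natDegree_le_of_ordGE (m := (f.natDegree : ℤ) + (L:ℤ) - n - 1) ?_ hφ0
      · exact this
      · have : -((f.natDegree : ℤ) + (L:ℤ) - n - 1) = (n:ℤ) + 1 - L - f.natDegree := by ring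
        rw [this]
        exact hφord
  exact ⟨φ, φ', hφ'0, hφ'deg, hφbound, hrep⟩

lemma LC_eq (S : ℕ → F) (i n : ℕ) (hi : 1 ≤ i)
    (hex : cfB S (i-1) ≠ 0)
    (hni : (cfQ S i).1.1.natDegree + (cfQ S i).2.1.natDegree ≤ n)
    (hni1 : cfB S i = 0 ∨ n < (cfQ S (i+1)).1.1.natDegree + (cfQ S (i+1)).2.1.natDegree) :
    LC n S = (cfQ S i).2.1.natDegree := by
  set L : ℕ := (cfQ S i).2.1.natDegree with hL
  have hq : (1 : Polynomial F) * (cfQ S i).2.1 - 0 * (cfQ S i).1.1 = (cfQ S i).2.1 := by ring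
  have hA := lemA S i n hi hex hni hni1 0 1 one_ne_zero (Or.inl rfl)
  rw [hq] at hA
  have hmem : L ∈ {d | ∃ φ : Polynomial F, Annihilates n S φ ∧ φ.natDegree = d} := by
    refine ⟨(cfQ S i).2.1, hA.1, ?_⟩
    have := hA.2
    rfl
  have hlow : ∀ d ∈ {d | ∃ φ : Polynomial F, Annihilates n S φ ∧ φ.natDegree = d}, L ≤ d := by
    rintro d ⟨f, hf, hdeg⟩
    obtain ⟨φ, φ', _, hdφ', _, _⟩ := lemB S i n hi hex hni hni1 f hf
    have h0 : (0:ℤ) ≤ (φ'.natDegree : ℤ) := by positivity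
    omega
  exact le_antisymm (Nat.sInf_le hmem) (le_csInf ⟨L, hmem⟩ hlow)

end CFaux

open Polynomial in
/-- For an essential `s = S|n` with `n ∈ [n_i, n_{i+1})`: the nonzero annihilating
polynomials of `s` are exactly `{φ' q₁ − φ q'₁ : φ' ≠ 0, deg φ ≤ deg φ' − e_s}`, and the
minimal polynomials are exactly `{φ' q₁ − φ q'₁ : φ' ∈ F^×, deg φ ≤ −e_s}`. -/
theorem annihilators_via_partial_quotients {F : Type*} [Field F] (S : ℕ → F)
    (i n : ℕ) (hi : 1 ≤ i) (hn : 2 ≤ n)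
    (hex : cfB S (i - 1) ≠ 0)
    (hni : (cfQ S i).1.1.natDegree + (cfQ S i).2.1.natDegree ≤ n)
    (hni1 : cfB S i = 0 ∨
      n < (cfQ S (i + 1)).1.1.natDegree + (cfQ S (i + 1)).2.1.natDegree)
    (hess : LC 1 S < LC n S) :
    (∀ f₁ : Polynomial F, Annihilates n S f₁ ↔
        ∃ φ φ' : Polynomial F, φ' ≠ 0 ∧
          (φ = 0 ∨ (φ.natDegree : ℤ) ≤ (φ'.natDegree : ℤ) - ((n : ℤ) + 1 - 2 * LC n S)) ∧
          f₁ = φ' * (cfQ S i).2.1 - φ * (cfQ S i).1.1) ∧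
      (∀ f₁ : Polynomial F, (Annihilates n S f₁ ∧ f₁.natDegree = LC n S) ↔
        ∃ φ φ' : Polynomial F, (∃ c : F, c ≠ 0 ∧ φ' = C c) ∧
          (φ = 0 ∨ (φ.natDegree : ℤ) ≤ -((n : ℤ) + 1 - 2 * LC n S)) ∧
          f₁ = φ' * (cfQ S i).2.1 - φ * (cfQ S i).1.1) := by
  have hLC : LC n S = (cfQ S i).2.1.natDegree := CFaux.LC_eq S i n hi hex hni hni1
  set L : ℕ := (cfQ S i).2.1.natDegree with hLdef
  constructor
  · intro f₁
    constructor
    · intro hf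
      obtain ⟨φ, φ', hφ'0, hdφ', hb, hrep⟩ := CFaux.lemB S i n hi hex hni hni1 f₁ hf
      refine ⟨φ, φ', hφ'0, ?_, hrep⟩
      rw [hLC]
      rcases hb with h | h
      · exact Or.inl h
      · right; omega
    · rintro ⟨φ, φ', hφ'0, hb, hrep⟩
      rw [hrep]
      refine (CFaux.lemA S i n hi hex hni hni1 φ φ' hφ'0 ?_).1
      rcases hb with h | h
      · exact Or.inl h
      · right; rw [hLC] at h; omega
  · intro f₁
    constructor
    · rintro ⟨hf, hdeg⟩
      obtain ⟨φ, φ', hφ'0, hdφ', hb, hrep⟩ := CFaux.lemB S i n hi hex hni hni1 f₁ hf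
      have hd0 : φ'.natDegree = 0 := by
        rw [hdeg, hLC] at hdφ'
        omega
      refine ⟨φ, φ', ⟨φ'.coeff 0, ?_, Polynomial.eq_C_of_natDegree_eq_zero hd0⟩, ?_, hrep⟩
      · intro hc
        apply hφ'0
        rw [Polynomial.eq_C_of_natDegree_eq_zero hd0, hc, map_zero]
      · rcases hb with h | h
        · exact Or.inl h
        · right
          rw [hdeg, hLC] at h
          rw [hLC]
          omega
    · rintro ⟨φ, φ', ⟨c, hc, hφ'C⟩, hb, hrep⟩
      have hφ'0 : φ' ≠ 0 := by
        rw [hφ'C]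
        exact fun h => hc (by simpa using h)
      have hd0 : φ'.natDegree = 0 := by rw [hφ'C]; exact Polynomial.natDegree_C c
      have hA := CFaux.lemA S i n hi hex hni hni1 φ φ' hφ'0 ?_
      · refine ⟨hrep ▸ hA.1, ?_⟩
        rw [hrep, hA.2, hd0, hLC]
        omega
      · rcases hb with h | h
        · exact Or.inl h
        · right
          rw [hLC] at h
          rw [hd0]
          omega
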